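/- For an abelian code C with generating idempotent e and M the hypermatrix afforded by D_ᾱ(C): the map P ↦ (unique idempotent e' with M(φ_{ᾱ,e'}) = P) is a bijection between nonzero q-orbit hypermatrices P ≤ M (i.e., supp(P) ⊆ supp(M)) and nonzero idempotents of C; consequently Δ_{B,ᾱ}(C) = min{Δ_B(P) : 0 ≠ P ≤ M}, i.e., the ᾱ-apparent distance of C equals the minimum B-apparent distance of the hypermatrix M(φ_{ᾱ,e}). -/

import Mathlib

attribute [local instance] Classical.propDecidable

/-- A family of ds-bounds (one relation for each length `m`). -/
abbrev DsFamily := ∀ m : ℕ, Set (ZMod m) → ℕ → Prop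

/-- The ideal of relations `(X_i^{r_i} - 1)_i` in `F[X₁,…,X_s]`; the abelian
code algebra `F(r₁,…,r_s)` is the quotient by this ideal. -/
noncomputable def mvSpan (s : ℕ) (r : Fin s → ℕ) (F : Type*) [Field F] :
    Ideal (MvPolynomial (Fin s) F) :=
  Ideal.span {g | ∃ i : Fin s, g = MvPolynomial.X i ^ r i - 1}

/-- The point `ᾱ^i = (α₁^{i₁}, …, α_s^{i_s})`. -/
def evalPt {s : ℕ} {r : Fin s → ℕ} {L : Type*} [Field L]
    (α : Fin s → L) (i : ∀ k, ZMod (r k)) : Fin s → L :=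
  fun k => α k ^ (i k).val

/-- The hypermatrix of coefficients of the multivariate discrete Fourier
transform `φ_{ᾱ,c} = Σ_{i∈I} c(ᾱ^i) X^i` of `c`. -/
noncomputable def dftMatrix {s : ℕ} {r : Fin s → ℕ} {F L : Type*} [Field F]
    [Field L] [Algebra F L] (α : Fin s → L) (c : MvPolynomial (Fin s) F) :
    (∀ k, ZMod (r k)) → L :=
  fun i => MvPolynomial.aeval (evalPt α i) c

/-- The defining set `D_ᾱ(S) = {i ∈ I : g(ᾱ^i) = 0 for all g ∈ S}`. -/
def definingSetMv {s : ℕ} (r : Fin s → ℕ) {F L : Type*} [Field F] [Field L]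
    [Algebra F L] (α : Fin s → L) (S : Set (MvPolynomial (Fin s) F)) :
    Set (∀ k, ZMod (r k)) :=
  {i | ∀ g ∈ S, MvPolynomial.aeval (evalPt α i) g = 0}

/-- The optimal ds-bound `δ̄(N) = max{b : (N,b) ∈ δ}` (as a supremum in `ℕ∞`). -/
noncomputable def dsOpt {n : ℕ} (δ : Set (ZMod n) → ℕ → Prop) (N : Set (ZMod n)) : ℕ∞ :=
  ⨆ a ∈ {a : ℕ | δ N a}, (a : ℕ∞)

/-- The `B`-apparent distance of an `s`-dimensional hypermatrix, defined
recursively: `Δ_B(0) = 0`; a nonzero `0`-dimensional hypermatrix (a scalar) has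
apparent distance `1`; and for `s ≥ 1`,
`Δ_B(M) = max_j ω_j(M)·ε_j(M)` where `ω_j(M) = max_{δ∈B} δ̄(Z_{r_j} \ supp_j M)`
and `ε_j(M)` is the maximum of the apparent distances of the nonzero
hypercolumns in direction `j`.  (For `s = 1` this reduces to
`Δ_B(v) = max_{δ∈B} δ̄(Z_n \ supp v)` on nonzero vectors.) -/
noncomputable def hypDist {L : Type*} [Field L] (B : Set DsFamily) :
    (s : ℕ) → (r : Fin s → ℕ) → ((∀ i, ZMod (r i)) → L) → ℕ∞
  | 0, _, M => if M = 0 then 0 else 1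
  | s + 1, r, M =>
    if M = 0 then 0 else
      ⨆ j : Fin (s + 1),
        (⨆ δ ∈ B, dsOpt (δ (r j))
            {k : ZMod (r j) | (fun x => M (j.insertNth k x)) = 0}) *
        ⨆ k ∈ {k : ZMod (r j) | (fun x => M (j.insertNth k x)) ≠ 0},
          hypDist B s (fun i => r (j.succAbove i)) (fun x => M (j.insertNth k x))

/-- The minimum Hamming distance of an abelian code `C` (an ideal of
`F[X₁,…,X_s]` containing the relations), codewords being represented by
polynomials with `i`-th partial degrees `< r i`. -/
noncomputable def minDistMv {s : ℕ} (r : Fin s → ℕ) {F : Type*} [Field F]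
    (C : Ideal (MvPolynomial (Fin s) F)) : ℕ :=
  sInf {w | ∃ c ∈ C, c ≠ 0 ∧ (∀ i, MvPolynomial.degreeOf i c < r i) ∧
    w = c.support.card}

/-- The apparent distance of an abelian code `C` with respect to `ᾱ` and `B`:
the minimum over nonzero codewords `c` of `Δ_B(M(φ_{ᾱ,c}))`. -/
noncomputable def appDistCodeAt {s : ℕ} (r : Fin s → ℕ) {F L : Type*} [Field F]
    [Field L] [Algebra F L] (B : Set DsFamily) (α : Fin s → L)
    (C : Ideal (MvPolynomial (Fin s) F)) : ℕ∞ :=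
  ⨅ c ∈ {c | c ∈ C ∧ c ∉ mvSpan s r F}, hypDist B s r (dftMatrix (r := r) α c)

/-- The apparent distance of an abelian code `C` with respect to `B`:
the maximum over all tuples `ᾱ ∈ U` of primitive roots of unity of the
`(B,ᾱ)`-apparent distances. -/
noncomputable def appDistCode {s : ℕ} (r : Fin s → ℕ) (F : Type*) (L : Type*)
    [Field F] [Field L] [Algebra F L] (B : Set DsFamily)
    (C : Ideal (MvPolynomial (Fin s) F)) : ℕ∞ :=
  ⨆ α ∈ {α : Fin s → L | ∀ i, IsPrimitiveRoot (α i) (r i)},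
    appDistCodeAt r B α C

/-- The `0/1` hypermatrix afforded by a set `D ⊆ I`: entry `0` at the indices in
`D` and `1` elsewhere. -/
noncomputable def afforded (L : Type*) [Field L] {s : ℕ} {r : Fin s → ℕ}
    (D : Set (∀ k, ZMod (r k))) : (∀ k, ZMod (r k)) → L :=
  fun i => if i ∈ D then 0 else 1

/-- `D` is a union of `q`-orbits iff it is closed under componentwise
multiplication by `q`. -/
def qClosed (q : ℕ) {s : ℕ} {r : Fin s → ℕ} (D : Set (∀ k, ZMod (r k))) : Prop :=
  ∀ i ∈ D, (fun k => (q : ZMod (r k)) * i k) ∈ D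

section ADHelpers
open MvPolynomial Finset

variable {K L : Type*} [Field K] [Field L]

lemma adGen_mem {s : ℕ} {r : Fin s → ℕ} (k : Fin s) :
    (X k ^ r k - 1 : MvPolynomial (Fin s) K) ∈ mvSpan s r K :=
  Ideal.subset_span ⟨k, rfl⟩

lemma adM0 {s : ℕ} {r : Fin s → ℕ} (k : Fin s) (a : ℕ) :
    (X k ^ a - X k ^ (a % r k) : MvPolynomial (Fin s) K) ∈ mvSpan s r K := by
  obtain ⟨u, hu⟩ := sub_dvd_pow_sub_pow (X k ^ r k : MvPolynomial (Fin s) K) 1 (a / r k)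
  have h1 : (X k : MvPolynomial (Fin s) K) ^ a = (X k ^ r k) ^ (a / r k) * X k ^ (a % r k) := by
    rw [← pow_mul, ← pow_add, Nat.div_add_mod]
  have h2 : (X k ^ a - X k ^ (a % r k) : MvPolynomial (Fin s) K)
      = (X k ^ r k - 1) * (u * X k ^ (a % r k)) := by
    rw [h1, ← mul_assoc, ← hu, one_pow, sub_mul, one_mul]
  rw [h2]; exact Ideal.mul_mem_right _ _ (adGen_mem k)

lemma adM1 {s : ℕ} {r : Fin s → ℕ} (k : Fin s) (a b : ℕ) (h : a % r k = b % r k) :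
    (X k ^ a - X k ^ b : MvPolynomial (Fin s) K) ∈ mvSpan s r K := by
  have := sub_mem (adM0 (K := K) (r := r) k a) (adM0 (K := K) (r := r) k b)
  rw [h, sub_sub_sub_cancel_right] at this
  exact this

lemma adM2 {s : ℕ} {r : Fin s → ℕ} (t : Finset (Fin s)) :
    ∀ f g : Fin s → ℕ, (∀ k, f k % r k = g k % r k) → (∀ k ∉ t, f k = g k) →
    ((∏ k, X k ^ f k) - ∏ k, X k ^ g k : MvPolynomial (Fin s) K) ∈ mvSpan s r K := by
  induction t using Finset.induction_on with
  | empty =>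
    intro f g _ h2
    have : f = g := funext fun k => h2 k (notMem_empty k)
    simp [this]
  | @insert a t' _ ih =>
    intro f g h1 h2
    set h : Fin s → ℕ := Function.update f a (g a) with hh
    have e1 : ((∏ k, X k ^ f k) - ∏ k, X k ^ h k : MvPolynomial (Fin s) K) ∈ mvSpan s r K := by
      have pf : (∏ k, X k ^ f k : MvPolynomial (Fin s) K)
          = X a ^ f a * ∏ k ∈ univ.erase a, X k ^ f k :=
        (mul_prod_erase univ _ (mem_univ a)).symm
      have ph : (∏ k, X k ^ h k : MvPolynomial (Fin s) K)
          = X a ^ g a * ∏ k ∈ univ.erase a, X k ^ f k := by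
        rw [← mul_prod_erase univ _ (mem_univ a)]
        congr 1
        · simp [hh]
        · exact prod_congr rfl fun k hk => by
            rw [hh, Function.update_of_ne (mem_erase.mp hk).1]
      rw [pf, ph, ← sub_mul]
      exact Ideal.mul_mem_right _ _ (adM1 a _ _ (h1 a))
    have e2 : ((∏ k, X k ^ h k) - ∏ k, X k ^ g k : MvPolynomial (Fin s) K) ∈ mvSpan s r K := by
      apply ih
      · intro k; by_cases hk : k = a
        · subst hk; simp [hh]
        · rw [hh, Function.update_of_ne hk]; exact h1 k
      · intro k hk; by_cases hka : k = a
        · subst hka; simp [hh]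
        · rw [hh, Function.update_of_ne hka]; exact h2 k (by simp [hka, hk])
    have := add_mem e1 e2
    rwa [sub_add_sub_cancel] at this

noncomputable def adRed {R : Type*} [CommRing R] {s : ℕ} (r : Fin s → ℕ) [∀ k, NeZero (r k)]
    (a : (∀ k, ZMod (r k)) → R) : MvPolynomial (Fin s) R :=
  ∑ j : ∀ k, ZMod (r k), C (a j) * ∏ k, X k ^ (j k).val

lemma adR1 {s : ℕ} {r : Fin s → ℕ} [∀ k, NeZero (r k)] (c : MvPolynomial (Fin s) K) :
    ∃ a, c - adRed r a ∈ mvSpan s r K := by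
  refine ⟨fun j => ∑ m ∈ c.support.filter fun m => (fun k => ((m k : ZMod (r k)))) = j,
    coeff m c, ?_⟩
  have hred : adRed r (fun j => ∑ m ∈ c.support.filter
        fun m => (fun k => ((m k : ZMod (r k)))) = j, coeff m c)
      = ∑ m ∈ c.support, C (coeff m c) * ∏ k, X k ^ (((m k : ZMod (r k))).val) := by
    rw [adRed, ← Finset.sum_fiberwise c.support (fun m => fun k => ((m k : ZMod (r k))))
      (fun m => C (coeff m c) * ∏ k, X k ^ (((m k : ZMod (r k))).val))]
    refine Finset.sum_congr rfl fun j _ => ?_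
    rw [map_sum, sum_mul]
    refine Finset.sum_congr rfl fun m hm => ?_
    have hj : (fun k => ((m k : ZMod (r k)))) = j := (mem_filter.mp hm).2
    rw [← hj]
  rw [hred]
  nth_rewrite 1 [c.as_sum]
  rw [← Finset.sum_sub_distrib]
  refine sum_mem fun m _ => ?_
  have hmono : (monomial m (coeff m c) : MvPolynomial (Fin s) K)
      = C (coeff m c) * ∏ k, X k ^ m k := by
    rw [monomial_eq]; congr 1
    exact Finsupp.prod_fintype _ _ fun i => pow_zero _
  rw [hmono, ← mul_sub]
  refine Ideal.mul_mem_left _ _ (adM2 univ _ _ (fun k => ?_) (fun k hk => absurd (mem_univ k) hk))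
  rw [ZMod.val_natCast]
  exact (Nat.mod_mod_of_dvd _ dvd_rfl).symm

end ADHelpers
section ADHelpers2
open MvPolynomial Finset

variable {K L : Type*} [Field K] [Field L]

/-- members of the relation ideal vanish at points whose coordinates are `r k`-th
roots of unity. -/
lemma adVanish {s : ℕ} {r : Fin s → ℕ} [Algebra K L] (x : Fin s → L)
    (hx : ∀ k, x k ^ r k = 1) {c : MvPolynomial (Fin s) K} (hc : c ∈ mvSpan s r K) :
    MvPolynomial.aeval x c = 0 := by
  have hle : mvSpan s r K ≤ RingHom.ker (MvPolynomial.aeval (R := K) x).toRingHom := by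
    rw [mvSpan, Ideal.span_le]
    rintro g ⟨k, rfl⟩
    simp [RingHom.mem_ker, hx k]
  simpa [RingHom.mem_ker] using hle hc

lemma adEvalPt_pow {s : ℕ} {r : Fin s → ℕ} (α : Fin s → L)
    (hα : ∀ k, α k ^ r k = 1) (i : ∀ k, ZMod (r k)) (k : Fin s) :
    (evalPt α i) k ^ r k = 1 := by
  rw [evalPt, ← pow_mul, mul_comm, pow_mul, hα k, one_pow]

/-- `ζ^a` only depends on `a % n` when `ζ^n = 1`. -/
lemma adPowMod {n : ℕ} {x : L} (hx : x ^ n = 1) (a : ℕ) : x ^ a = x ^ (a % n) := by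
  conv_lhs => rw [← Nat.div_add_mod a n]
  rw [pow_add, pow_mul, hx, one_pow, one_mul]

lemma adPowModEq {n : ℕ} {x : L} (hx : x ^ n = 1) {a b : ℕ} (h : a % n = b % n) :
    x ^ a = x ^ b := by rw [adPowMod hx a, adPowMod hx b, h]

/-- geometric-sum orthogonality over `ZMod n`. -/
lemma adO2 {n : ℕ} [NeZero n] {x : L} (hx : x ^ n = 1) :
    ∑ t : ZMod n, x ^ t.val = if x = 1 then (n : L) else 0 := by
  have hsum : ∑ t : ZMod n, x ^ t.val = ∑ t ∈ Finset.range n, x ^ t := by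
    refine Finset.sum_nbij' (fun t => t.val) (fun t => (t : ZMod n)) ?_ ?_ ?_ ?_ ?_
    · intro a _; exact Finset.mem_range.mpr (ZMod.val_lt a)
    · intro a _; exact Finset.mem_univ _
    · intro a _
      have := ZMod.natCast_val (R := ZMod n) a
      simpa using this
    · intro a ha
      show ((a : ZMod n)).val = a
      rw [ZMod.val_natCast]; exact Nat.mod_eq_of_lt (Finset.mem_range.mp ha)
    · intro a _; rfl
  rw [hsum]
  by_cases h1 : x = 1
  · simp [h1]
  · rw [if_neg h1, geom_sum_eq h1, hx, sub_self, zero_div]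

/-- the weight `∏ₖ βₖ^{iₖjₖ}`. -/
noncomputable def adW {s : ℕ} {r : Fin s → ℕ} (β : Fin s → L)
    (i j : ∀ k, ZMod (r k)) : L :=
  ∏ k, β k ^ ((i k).val * (j k).val)

lemma adW_symm {s : ℕ} {r : Fin s → ℕ} (β : Fin s → L) (i j : ∀ k, ZMod (r k)) :
    adW β i j = adW β j i := by
  unfold adW; exact Finset.prod_congr rfl fun k _ => by rw [mul_comm]

/-- the key orthogonality relation. -/
lemma adO3 {s : ℕ} {r : Fin s → ℕ} [∀ k, NeZero (r k)] {α : Fin s → L}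
    (hα : ∀ k, IsPrimitiveRoot (α k) (r k)) (u w : ∀ k, ZMod (r k)) :
    ∑ j : ∀ k, ZMod (r k), adW α u j * adW (fun k => (α k)⁻¹) w j
      = if u = w then ((∏ k, r k : ℕ) : L) else 0 := by
  have hone : ∀ k, α k ^ r k = 1 := fun k => (hα k).pow_eq_one
  have hα0 : ∀ k, α k ≠ 0 := fun k => (hα k).ne_zero (Nat.pos_of_ne_zero (NeZero.ne (r k))).ne'
  set x : Fin s → L := fun k => α k ^ (u k).val * (α k ^ (w k).val)⁻¹ with hxdef
  have hterm : ∀ j : ∀ k, ZMod (r k),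
      adW α u j * adW (fun k => (α k)⁻¹) w j = ∏ k, x k ^ (j k).val := by
    intro j
    rw [adW, adW, ← Finset.prod_mul_distrib]
    refine Finset.prod_congr rfl fun k _ => ?_
    have h1 : ((α k)⁻¹) ^ ((w k).val * (j k).val)
        = (α k ^ ((w k).val * (j k).val))⁻¹ := inv_pow _ _
    rw [h1, hxdef, mul_pow, inv_pow, ← pow_mul, ← pow_mul]
  rw [Finset.sum_congr rfl fun j _ => hterm j]
  have hswap : ∑ j : ∀ k, ZMod (r k), ∏ k, x k ^ (j k).val
      = ∏ k, ∑ t : ZMod (r k), x k ^ t.val := by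
    rw [Finset.prod_univ_sum]
    rw [Fintype.piFinset_univ]
  rw [hswap]
  have hxpow : ∀ k, x k ^ r k = 1 := by
    intro k
    simp only [hxdef]
    rw [mul_pow, inv_pow, ← pow_mul, ← pow_mul, mul_comm ((u k).val), mul_comm ((w k).val),
      pow_mul, hone k, one_pow, pow_mul, hone k, one_pow, inv_one, mul_one]
  have hfac : ∀ k, (∑ t : ZMod (r k), x k ^ t.val) = if u k = w k then ((r k : ℕ) : L) else 0 := by
    intro k
    rw [adO2 (hxpow k)]
    congr 1
    simp only [eq_iff_iff]
    constructor
    · intro h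
      have hne : α k ^ (w k).val ≠ 0 := pow_ne_zero _ (hα0 k)
      simp only [hxdef] at h
      rw [mul_inv_eq_one₀ hne] at h
      exact ZMod.val_injective _ ((hα k).pow_inj (ZMod.val_lt _) (ZMod.val_lt _) h)
    · intro h
      simp only [hxdef]
      rw [h, mul_inv_cancel₀ (pow_ne_zero _ (hα0 k))]
  rw [Finset.prod_congr rfl fun k _ => hfac k]
  by_cases h : u = w
  · subst h; simp
  · rw [if_neg h]
    obtain ⟨k, hk⟩ : ∃ k, u k ≠ w k := by
      by_contra hall; push_neg at hall; exact h (funext hall)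
    exact Finset.prod_eq_zero (Finset.mem_univ k) (if_neg hk)

lemma adEvalRed {s : ℕ} {r : Fin s → ℕ} [∀ k, NeZero (r k)] (α : Fin s → L)
    (a : (∀ k, ZMod (r k)) → L) (i : ∀ k, ZMod (r k)) :
    MvPolynomial.eval (evalPt α i) (adRed r a) = ∑ j : ∀ k, ZMod (r k), a j * adW α i j := by
  rw [adRed, map_sum]
  refine Finset.sum_congr rfl fun j _ => ?_
  rw [map_mul, eval_C, map_prod]
  congr 1
  rw [adW]
  refine Finset.prod_congr rfl fun k _ => ?_
  rw [map_pow, eval_X, evalPt, ← pow_mul]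

/-- inversion A : coefficient recovery. -/
lemma adInvA {s : ℕ} {r : Fin s → ℕ} [∀ k, NeZero (r k)] {α : Fin s → L}
    (hα : ∀ k, IsPrimitiveRoot (α k) (r k)) (a : (∀ k, ZMod (r k)) → L)
    (j : ∀ k, ZMod (r k)) :
    ∑ i : ∀ k, ZMod (r k),
        MvPolynomial.eval (evalPt α i) (adRed r a) * adW (fun k => (α k)⁻¹) j i
      = a j * ((∏ k, r k : ℕ) : L) := by
  have : ∀ i, MvPolynomial.eval (evalPt α i) (adRed r a) * adW (fun k => (α k)⁻¹) j i
      = ∑ j' : ∀ k, ZMod (r k), a j' * (adW α j' i * adW (fun k => (α k)⁻¹) j i) := by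
    intro i
    rw [adEvalRed, Finset.sum_mul]
    exact Finset.sum_congr rfl fun j' _ => by rw [adW_symm α i j', mul_assoc]
  rw [Finset.sum_congr rfl fun i _ => this i, Finset.sum_comm]
  have hrow : ∀ j', ∑ i : ∀ k, ZMod (r k), a j' * (adW α j' i * adW (fun k => (α k)⁻¹) j i)
      = a j' * if j' = j then ((∏ k, r k : ℕ) : L) else 0 := by
    intro j'
    rw [← Finset.mul_sum, adO3 hα j' j]
  rw [Finset.sum_congr rfl fun j' _ => hrow j']
  simp only [mul_ite, mul_zero]
  rw [Finset.sum_ite_eq' Finset.univ j (fun j' => a j' * ((∏ k, r k : ℕ) : L))]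
  simp

lemma adInvB {s : ℕ} {r : Fin s → ℕ} [∀ k, NeZero (r k)] {α : Fin s → L}
    (hα : ∀ k, IsPrimitiveRoot (α k) (r k)) (hN : ((∏ k, r k : ℕ) : L) ≠ 0)
    (v : (∀ k, ZMod (r k)) → L) (i : ∀ k, ZMod (r k)) :
    MvPolynomial.eval (evalPt α i) (adRed r (fun j => ((∏ k, r k : ℕ) : L)⁻¹ *
      ∑ i', v i' * adW (fun k => (α k)⁻¹) i' j)) = v i := by
  rw [adEvalRed]
  have h1 : ∀ j, (((∏ k, r k : ℕ) : L)⁻¹ * ∑ i', v i' * adW (fun k => (α k)⁻¹) i' j) * adW α i j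
      = ((∏ k, r k : ℕ) : L)⁻¹ * ∑ i', v i' * (adW α i j * adW (fun k => (α k)⁻¹) i' j) := by
    intro j
    rw [mul_assoc, Finset.sum_mul]
    congr 1
    exact Finset.sum_congr rfl fun i' _ => by ring
  rw [Finset.sum_congr rfl fun j _ => h1 j, ← Finset.mul_sum, Finset.sum_comm]
  have h2 : ∀ i', ∑ j : ∀ k, ZMod (r k), v i' * (adW α i j * adW (fun k => (α k)⁻¹) i' j)
      = v i' * if i = i' then ((∏ k, r k : ℕ) : L) else 0 := by
    intro i'
    rw [← Finset.mul_sum, adO3 hα i i']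
  rw [Finset.sum_congr rfl fun i' _ => h2 i']
  simp only [mul_ite, mul_zero]
  rw [Finset.sum_ite_eq Finset.univ i (fun i' => v i' * ((∏ k, r k : ℕ) : L))]
  rw [if_pos (Finset.mem_univ i), mul_comm (v i), ← mul_assoc, inv_mul_cancel₀ hN, one_mul]

lemma adVanishL {s : ℕ} {r : Fin s → ℕ} (x : Fin s → L)
    (hx : ∀ k, x k ^ r k = 1) {c : MvPolynomial (Fin s) L} (hc : c ∈ mvSpan s r L) :
    MvPolynomial.eval x c = 0 := by
  have hle : mvSpan s r L ≤ RingHom.ker (MvPolynomial.eval x) := by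
    rw [mvSpan, Ideal.span_le]
    rintro g ⟨k, rfl⟩
    simp [RingHom.mem_ker, hx k]
  simpa [RingHom.mem_ker] using hle hc

lemma adRed_zero {s : ℕ} {r : Fin s → ℕ} [∀ k, NeZero (r k)] {R : Type*} [CommRing R] :
    adRed (R := R) r (fun _ => 0) = 0 := by simp [adRed]

lemma adKerL {s : ℕ} {r : Fin s → ℕ} [∀ k, NeZero (r k)] {α : Fin s → L}
    (hα : ∀ k, IsPrimitiveRoot (α k) (r k)) (hN : ((∏ k, r k : ℕ) : L) ≠ 0)
    (c : MvPolynomial (Fin s) L) :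
    (∀ i : ∀ k, ZMod (r k), MvPolynomial.eval (evalPt α i) c = 0) ↔ c ∈ mvSpan s r L := by
  constructor
  · intro h0
    obtain ⟨a, ha⟩ := adR1 (r := r) c
    have hred0 : ∀ i : ∀ k, ZMod (r k), MvPolynomial.eval (evalPt α i) (adRed r a) = 0 := by
      intro i
      have := adVanishL (evalPt α i) (adEvalPt_pow α (fun k => (hα k).pow_eq_one) i) ha
      rw [map_sub, h0 i, zero_sub, neg_eq_zero] at this
      exact this
    have ha0 : a = fun _ => 0 := by
      funext j
      have := adInvA hα a j
      simp only [hred0, zero_mul, Finset.sum_const_zero] at this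
      exact (mul_eq_zero.mp this.symm).resolve_right hN
    rw [ha0, adRed_zero, sub_zero] at ha
    exact ha
  · intro hc i
    exact adVanishL (evalPt α i) (adEvalPt_pow α (fun k => (hα k).pow_eq_one) i) hc

end ADHelpers2


section ADHelpers3
open MvPolynomial Finset

variable {K L : Type*} [Field K] [Field L] [Algebra K L]

lemma adMapRed {s : ℕ} {r : Fin s → ℕ} [∀ k, NeZero (r k)] (a : (∀ k, ZMod (r k)) → K) :
    MvPolynomial.map (algebraMap K L) (adRed r a)
      = adRed r (fun j => algebraMap K L (a j)) := by
  rw [adRed, adRed, map_sum]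
  refine Finset.sum_congr rfl fun j _ => ?_
  rw [map_mul, MvPolynomial.map_C, map_prod]
  congr 1
  exact Finset.prod_congr rfl fun k _ => by rw [map_pow, MvPolynomial.map_X]

lemma adMapSpan {s : ℕ} {r : Fin s → ℕ} {c : MvPolynomial (Fin s) K}
    (hc : c ∈ mvSpan s r K) :
    MvPolynomial.map (algebraMap K L) c ∈ mvSpan s r L := by
  have hle : mvSpan s r K ≤ (mvSpan s r L).comap (MvPolynomial.map (algebraMap K L)) := by
    rw [mvSpan, Ideal.span_le]
    rintro g ⟨k, rfl⟩
    show MvPolynomial.map (algebraMap K L) (X k ^ r k - 1) ∈ mvSpan s r L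
    rw [map_sub, map_pow, MvPolynomial.map_X, map_one]
    exact adGen_mem k
  exact hle hc

lemma adDftEval {s : ℕ} {r : Fin s → ℕ} (α : Fin s → L) (c : MvPolynomial (Fin s) K)
    (i : ∀ k, ZMod (r k)) :
    dftMatrix (r := r) α c i
      = MvPolynomial.eval (evalPt α i) (MvPolynomial.map (algebraMap K L) c) := by
  rw [dftMatrix, aeval_def, ← eval_map]

lemma adKerF {s : ℕ} {r : Fin s → ℕ} [∀ k, NeZero (r k)] {α : Fin s → L}
    (hα : ∀ k, IsPrimitiveRoot (α k) (r k)) (hN : ((∏ k, r k : ℕ) : L) ≠ 0)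
    (c : MvPolynomial (Fin s) K) :
    dftMatrix (r := r) α c = 0 ↔ c ∈ mvSpan s r K := by
  constructor
  · intro h0
    obtain ⟨a, ha⟩ := adR1 (r := r) c
    have hmap : ∀ i : ∀ k, ZMod (r k),
        MvPolynomial.eval (evalPt α i) (adRed r (fun j => algebraMap K L (a j))) = 0 := by
      intro i
      rw [← adMapRed]
      have h1 : MvPolynomial.eval (evalPt α i)
          (MvPolynomial.map (algebraMap K L) (c - adRed r a)) = 0 :=
        adVanishL (evalPt α i) (adEvalPt_pow α (fun k => (hα k).pow_eq_one) i)
          (adMapSpan ha)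
      rw [map_sub, map_sub] at h1
      rw [← adDftEval] at h1
      have h2 : dftMatrix (r := r) α c i = 0 := by rw [h0]; rfl
      rw [h2, zero_sub, neg_eq_zero] at h1
      exact h1
    have ha0 : ∀ j, a j = 0 := by
      intro j
      have := adInvA hα (fun j => algebraMap K L (a j)) j
      simp only [hmap, zero_mul, Finset.sum_const_zero] at this
      have h3 : algebraMap K L (a j) = 0 :=
        (mul_eq_zero.mp this.symm).resolve_right hN
      exact (map_eq_zero (algebraMap K L)).mp h3
    have : a = fun _ => 0 := funext ha0
    rw [this, adRed_zero, sub_zero] at ha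
    exact ha
  · intro hc
    funext i
    show MvPolynomial.aeval (evalPt α i) c = 0
    exact adVanish (evalPt α i) (adEvalPt_pow α (fun k => (hα k).pow_eq_one) i) hc

end ADHelpers3

section ADHelpers4
open MvPolynomial Finset

variable {F L : Type*} [Field F] [Fintype F] [Field L] [Algebra F L]

/-- fixed points of `x ↦ x^q` in `L` lie in the image of `F`. -/
lemma adFixed (q : ℕ) (hq : Fintype.card F = q) {x : L} (hx : x ^ q = x) :
    ∃ a : F, algebraMap F L a = x := by
  classical
  set f : Polynomial L := Polynomial.X ^ q - Polynomial.X with hf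
  have hq2 : 1 < q := hq ▸ Fintype.one_lt_card
  have hdeg : f.natDegree = q := by
    rw [hf]
    rw [Polynomial.natDegree_sub_eq_left_of_natDegree_lt]
    · exact Polynomial.natDegree_X_pow q
    · rw [Polynomial.natDegree_X_pow, Polynomial.natDegree_X]
      exact hq2
  have hf0 : f ≠ 0 := fun h => by simp [h] at hdeg; omega
  set T : Finset L := f.roots.toFinset with hT
  have hTcard : T.card ≤ q := by
    calc T.card ≤ Multiset.card f.roots := Multiset.toFinset_card_le _
    _ ≤ f.natDegree := Polynomial.card_roots' f
    _ = q := hdeg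
  set S : Finset L := Finset.univ.image (algebraMap F L) with hS
  have hroot : ∀ y : F, (algebraMap F L y) ∈ T := by
    intro y
    rw [hT, Multiset.mem_toFinset, Polynomial.mem_roots hf0]
    show Polynomial.eval _ f = 0
    rw [hf]
    simp only [Polynomial.eval_sub, Polynomial.eval_pow, Polynomial.eval_X]
    rw [← map_pow, ← hq, FiniteField.pow_card, sub_self]
  by_contra hc
  push_neg at hc
  have hxT : x ∈ T := by
    rw [hT, Multiset.mem_toFinset, Polynomial.mem_roots hf0]
    show Polynomial.eval _ f = 0
    simp [hf, hx]
  have hxS : x ∉ S := by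
    rw [hS]
    intro hmem
    obtain ⟨a, _, ha⟩ := Finset.mem_image.mp hmem
    exact hc a ha
  have hsub : insert x S ⊆ T := by
    intro y hy
    rcases Finset.mem_insert.mp hy with h | h
    · subst h; exact hxT
    · obtain ⟨a, _, ha⟩ := Finset.mem_image.mp h
      subst ha; exact hroot a
  have hScard : S.card = q := by
    rw [hS, Finset.card_image_of_injective _ (algebraMap F L).injective, Finset.card_univ, hq]
  have := Finset.card_le_card hsub
  rw [Finset.card_insert_of_notMem hxS, hScard] at this
  omega

/-- `ζ^a = ζ^{(a : ZMod n).val}` when `ζ^n = 1`. -/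
lemma adPowValCast {n : ℕ} [NeZero n] {x : L} (hx : x ^ n = 1) (a : ℕ) :
    x ^ a = x ^ ((a : ZMod n)).val := by
  rw [ZMod.val_natCast, ← adPowMod hx a]

lemma adFrobDft {s : ℕ} {r : Fin s → ℕ} [∀ k, NeZero (r k)] (q : ℕ)
    (hq : Fintype.card F = q) {α : Fin s → L}
    (hα : ∀ k, IsPrimitiveRoot (α k) (r k)) (c : MvPolynomial (Fin s) F)
    (i : ∀ k, ZMod (r k)) :
    dftMatrix (r := r) α c (fun k => (q : ZMod (r k)) * i k)
      = (dftMatrix (r := r) α c i) ^ q := by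
  set p : ℕ := ringChar F with hp
  haveI : CharP F p := ringChar.charP F
  obtain ⟨m, hprime, hcard⟩ := FiniteField.card F p
  haveI : Fact p.Prime := ⟨hprime⟩
  haveI : CharP L p := charP_of_injective_algebraMap (algebraMap F L).injective p
  set σ : L →+* L := iterateFrobenius L p (m : ℕ) with hσ
  have hσ_eq : ∀ x : L, σ x = x ^ q := by
    intro x; rw [hσ, iterateFrobenius_def, ← hcard, hq]
  have hone : ∀ k, α k ^ r k = 1 := fun k => (hα k).pow_eq_one
  have hcomp : σ.comp (algebraMap F L) = algebraMap F L := by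
    ext a
    rw [RingHom.comp_apply, hσ_eq, ← map_pow, ← hq, FiniteField.pow_card]
  have hpt : σ ∘ (evalPt α i) = evalPt α (fun k => (q : ZMod (r k)) * i k) := by
    funext k
    show σ (α k ^ (i k).val) = α k ^ (((q : ZMod (r k)) * i k)).val
    rw [hσ_eq, ← pow_mul]
    have hcast : ((q : ZMod (r k)) * i k) = ((((i k).val * q : ℕ)) : ZMod (r k)) := by
      push_cast
      rw [ZMod.natCast_val, ZMod.cast_id]
      ring
    rw [hcast, ← adPowValCast (hone k)]
  rw [dftMatrix, dftMatrix, ← hσ_eq]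
  rw [aeval_def, aeval_def, eval₂_comp_left σ (algebraMap F L) (evalPt α i) c, hcomp, hpt]

lemma adCoefFixed {s : ℕ} {r : Fin s → ℕ} [∀ k, NeZero (r k)] (q : ℕ)
    (hq : Fintype.card F = q) {α : Fin s → L}
    (hα : ∀ k, IsPrimitiveRoot (α k) (r k))
    (hbij : Function.Bijective
      (fun i : ∀ k, ZMod (r k) => (fun k => (q : ZMod (r k)) * i k)))
    (v : (∀ k, ZMod (r k)) → L)
    (htwist : ∀ i, v (fun k => (q : ZMod (r k)) * i k) = (v i) ^ q)
    (j : ∀ k, ZMod (r k)) :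
    (((∏ k, r k : ℕ) : L)⁻¹ * ∑ i, v i * adW (fun k => (α k)⁻¹) i j) ^ q
      = ((∏ k, r k : ℕ) : L)⁻¹ * ∑ i, v i * adW (fun k => (α k)⁻¹) i j := by
  set p : ℕ := ringChar F with hp
  haveI : CharP F p := ringChar.charP F
  obtain ⟨m, hprime, hcard⟩ := FiniteField.card F p
  haveI : Fact p.Prime := ⟨hprime⟩
  haveI : CharP L p := charP_of_injective_algebraMap (algebraMap F L).injective p
  set σ : L →+* L := iterateFrobenius L p (m : ℕ) with hσ
  have hσ_eq : ∀ x : L, σ x = x ^ q := by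
    intro x; rw [hσ, iterateFrobenius_def, ← hcard, hq]
  set β : Fin s → L := fun k => (α k)⁻¹ with hβ
  have hβone : ∀ k, β k ^ r k = 1 := by
    intro k; rw [hβ, inv_pow, (hα k).pow_eq_one, inv_one]
  have hW : ∀ i, σ (adW β i j) = adW β (fun k => (q : ZMod (r k)) * i k) j := by
    intro i
    rw [adW, map_prod]
    refine Finset.prod_congr rfl fun k _ => ?_
    rw [map_pow, hσ_eq, ← pow_mul]
    show β k ^ (q * ((i k).val * (j k).val)) = β k ^ (((q : ZMod (r k)) * i k).val * (j k).val)
    refine adPowModEq (hβone k) ?_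
    have h1 : ((q : ZMod (r k)) * i k).val = (q * (i k).val) % r k := by
      have hcast : ((q : ZMod (r k)) * i k) = (((q * (i k).val : ℕ)) : ZMod (r k)) := by
        push_cast
        rw [ZMod.natCast_val, ZMod.cast_id]
      rw [hcast, ZMod.val_natCast]
    rw [h1]
    have h2 : q * ((i k).val * (j k).val) = (q * (i k).val) * (j k).val := by ring
    rw [h2]
    exact Nat.ModEq.mul_right _ (Nat.mod_mod_of_dvd _ dvd_rfl).symm
  rw [← hσ_eq, map_mul, map_inv₀, map_natCast, map_sum]
  congr 1
  have hterm : ∀ i, σ (v i * adW β i j)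
      = v (fun k => (q : ZMod (r k)) * i k) * adW β (fun k => (q : ZMod (r k)) * i k) j := by
    intro i
    rw [map_mul, hW, hσ_eq, htwist]
  rw [Finset.sum_congr rfl fun i _ => hterm i]
  exact hbij.sum_comp fun i => v i * adW β i j

end ADHelpers4

lemma hypDist_congr {L : Type*} [Field L] (B : Set DsFamily) :
    ∀ (s : ℕ) (r : Fin s → ℕ) (M M' : (∀ i, ZMod (r i)) → L),
    (∀ i, M i = 0 ↔ M' i = 0) → hypDist B s r M = hypDist B s r M' := by
  intro s
  induction s with
  | zero =>
    intro r M M' h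
    have hz : (M = 0) ↔ (M' = 0) := by
      constructor
      · intro hm; funext i; exact (h i).mp (congrFun hm i)
      · intro hm; funext i; exact (h i).mpr (congrFun hm i)
    simp only [hypDist]
    by_cases h0 : M = 0
    · rw [if_pos h0, if_pos (hz.mp h0)]
    · rw [if_neg h0, if_neg (fun hm => h0 (hz.mpr hm))]
  | succ n ih =>
    intro r M M' h
    have hz : (M = 0) ↔ (M' = 0) := by
      constructor
      · intro hm; funext i; exact (h i).mp (congrFun hm i)
      · intro hm; funext i; exact (h i).mpr (congrFun hm i)
    simp only [hypDist]
    by_cases h0 : M = 0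
    · rw [if_pos h0, if_pos (hz.mp h0)]
    · rw [if_neg h0, if_neg (fun hm => h0 (hz.mpr hm))]
      refine iSup_congr fun j => ?_
      have hcol : ∀ k : ZMod (r j), ((fun x => M (j.insertNth k x)) = 0)
          ↔ ((fun x => M' (j.insertNth k x)) = 0) := by
        intro k
        constructor
        · intro hm; funext x; exact (h _).mp (congrFun hm x)
        · intro hm; funext x; exact (h _).mpr (congrFun hm x)
      have hset : {k : ZMod (r j) | (fun x => M (j.insertNth k x)) = 0}
          = {k : ZMod (r j) | (fun x => M' (j.insertNth k x)) = 0} :=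
        Set.ext fun k => hcol k
      refine congrArg₂ (· * ·) (by rw [hset]) ?_
      refine iSup_congr fun k => ?_
      refine iSup_congr_Prop (not_congr (hcol k)) fun _ => ?_
      exact ih _ _ _ fun x => h _

/-- for an abelian code `C` with generating idempotent `e` and
`M` the hypermatrix afforded by `D_ᾱ(C)`: nonzero `q`-orbit hypermatrices
`P ≤ M` correspond bijectively to the nonzero idempotents of `C` (via
`P = M(φ_{ᾱ,e'})`, uniquely modulo the relations); consequently the
`(B,ᾱ)`-apparent distance of `C` equals `min{Δ_B(P) : 0 ≠ P ≤ M}`. -/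
theorem appDistCodeAt_eq_min_over_qOrbit_hypermatrices
    {F L : Type*} [Field F] [Fintype F] [Field L] [Algebra F L]
    (q : ℕ) (hq : Fintype.card F = q)
    (s : ℕ) (r : Fin s → ℕ) (hr : ∀ i, 0 < r i) (hss : ∀ i, ((r i : ℕ) : F) ≠ 0)
    (α : Fin s → L) (hα : ∀ i, IsPrimitiveRoot (α i) (r i))
    (B : Set DsFamily)
    (C : Ideal (MvPolynomial (Fin s) F)) (e : MvPolynomial (Fin s) F)
    (he : e ∈ C) (heid : e * e - e ∈ mvSpan s r F)
    (hgen : C = mvSpan s r F ⊔ Ideal.span {e})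
    (M : (∀ k, ZMod (r k)) → L)
    (hM : M = afforded L (definingSetMv r α (C : Set (MvPolynomial (Fin s) F)))) :
    (∀ D : Set (∀ k, ZMod (r k)), qClosed q D → D ≠ Set.univ →
        {i | afforded L D i ≠ 0} ⊆ {i | M i ≠ 0} →
        ∃ e' : MvPolynomial (Fin s) F,
          (e' ∈ C ∧ e' ∉ mvSpan s r F ∧ e' * e' - e' ∈ mvSpan s r F ∧
            dftMatrix (r := r) α e' = afforded L D) ∧
          ∀ e'' : MvPolynomial (Fin s) F,
            (e'' ∈ C ∧ e'' ∉ mvSpan s r F ∧ e'' * e'' - e'' ∈ mvSpan s r F ∧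
              dftMatrix (r := r) α e'' = afforded L D) →
            e'' - e' ∈ mvSpan s r F) ∧
    (∀ e' : MvPolynomial (Fin s) F,
        e' ∈ C → e' ∉ mvSpan s r F → e' * e' - e' ∈ mvSpan s r F →
        ∃ D : Set (∀ k, ZMod (r k)), qClosed q D ∧ D ≠ Set.univ ∧
          {i | afforded L D i ≠ 0} ⊆ {i | M i ≠ 0} ∧
          dftMatrix (r := r) α e' = afforded L D) ∧
    appDistCodeAt r B α C =
      ⨅ P ∈ {P : (∀ k, ZMod (r k)) → L |
          (∃ D, qClosed q D ∧ P = afforded L D) ∧ P ≠ 0 ∧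
          {i | P i ≠ 0} ⊆ {i | M i ≠ 0}},
        hypDist B s r P := by
  haveI : ∀ k, NeZero (r k) := fun k => ⟨(hr k).ne'⟩
  classical
  have hNL : ((∏ k, r k : ℕ) : L) ≠ 0 := by
    rw [Nat.cast_prod]
    refine Finset.prod_ne_zero_iff.mpr fun k _ => ?_
    intro h0
    rw [show ((r k : ℕ) : L) = algebraMap F L ((r k : ℕ) : F) from (map_natCast _ _).symm,
      map_eq_zero] at h0
    exact hss k h0
  have hq0 : q ≠ 0 := by rw [← hq]; exact Fintype.card_ne_zero
  have hone : ∀ k, α k ^ r k = 1 := fun k => (hα k).pow_eq_one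
  have hker : ∀ c : MvPolynomial (Fin s) F,
      dftMatrix (r := r) α c = 0 ↔ c ∈ mvSpan s r F := fun c => adKerF hα hNL c
  -- dft of e is idempotent-valued
  have hEe : ∀ i, dftMatrix (r := r) α e i * dftMatrix (r := r) α e i
      = dftMatrix (r := r) α e i := by
    intro i
    have h0 : dftMatrix (r := r) α (e * e - e) = 0 := (hker _).mpr heid
    have h1 := congrFun h0 i
    simp only [dftMatrix, map_sub, map_mul, Pi.zero_apply] at h1
    have := sub_eq_zero.mp h1
    exact this
  have hval01 : ∀ x : L, x * x = x → x = 0 ∨ x = 1 := by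
    intro x hx
    have : x * (x - 1) = 0 := by rw [mul_sub, hx, mul_one, sub_self]
    rcases mul_eq_zero.mp this with h | h
    · exact Or.inl h
    · exact Or.inr (sub_eq_zero.mp h)
  have hE01 : ∀ i, dftMatrix (r := r) α e i = 0 ∨ dftMatrix (r := r) α e i = 1 :=
    fun i => hval01 _ (hEe i)
  -- defining set description
  have hdefSet : ∀ i : ∀ k, ZMod (r k),
      i ∈ definingSetMv r α (C : Set (MvPolynomial (Fin s) F))
        ↔ dftMatrix (r := r) α e i = 0 := by
    intro i
    constructor
    · intro h; exact h e he
    · intro h g hg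
      rw [hgen] at hg
      rcases Submodule.mem_sup.mp hg with ⟨m', hm', y, hy, rfl⟩
      obtain ⟨h', rfl⟩ := Ideal.mem_span_singleton'.mp hy
      rw [map_add, map_mul, adVanish (evalPt α i) (adEvalPt_pow α hone i) hm',
        show MvPolynomial.aeval (evalPt α i) e = 0 from h, mul_zero, add_zero]
  have hMdef : ∀ i, M i ≠ 0 ↔
      i ∉ definingSetMv r α (C : Set (MvPolynomial (Fin s) F)) := by
    intro i
    rw [hM]
    by_cases hd : i ∈ definingSetMv r α (C : Set (MvPolynomial (Fin s) F))
    · exact iff_of_false (by simp [afforded, hd]) (by simp [hd])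
    · exact iff_of_true (by simp [afforded, hd]) hd
  -- coprimality and bijections
  have hco : ∀ k, Nat.Coprime q (r k) := by
    intro k
    haveI : CharP F (ringChar F) := ringChar.charP F
    obtain ⟨m, hprime, hcard⟩ := FiniteField.card F (ringChar F)
    have hpd : ¬ (ringChar F) ∣ r k := by
      intro hdvd
      exact hss k ((CharP.cast_eq_zero_iff F (ringChar F) (r k)).mpr hdvd)
    have hcop : Nat.Coprime (ringChar F) (r k) :=
      (Nat.Prime.coprime_iff_not_dvd hprime).mpr hpd
    rw [← hq, hcard]
    exact hcop.pow_left _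
  have hbijZ : ∀ k, Function.Bijective
      (fun x : ZMod (r k) => (q : ZMod (r k)) * x) := by
    intro k
    have hcoe : ((ZMod.unitOfCoprime q (hco k) : (ZMod (r k))ˣ) : ZMod (r k))
        = (q : ZMod (r k)) := ZMod.coe_unitOfCoprime q (hco k)
    have := Units.mulLeft_bijective (ZMod.unitOfCoprime q (hco k))
    rw [hcoe] at this
    exact this
  have hbij : Function.Bijective
      (fun i : ∀ k, ZMod (r k) => (fun k => (q : ZMod (r k)) * i k)) := by
    constructor
    · intro a b hab
      funext k
      exact (hbijZ k).1 (congrFun hab k)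
    · intro y
      refine ⟨fun k => ((hbijZ k).2 (y k)).choose,
        funext fun k => ((hbijZ k).2 (y k)).choose_spec⟩
  -- PART 1
  have hpart1 : ∀ D : Set (∀ k, ZMod (r k)), qClosed q D → D ≠ Set.univ →
      {i | afforded L D i ≠ 0} ⊆ {i | M i ≠ 0} →
      ∃ e' : MvPolynomial (Fin s) F,
        (e' ∈ C ∧ e' ∉ mvSpan s r F ∧ e' * e' - e' ∈ mvSpan s r F ∧
          dftMatrix (r := r) α e' = afforded L D) ∧
        ∀ e'' : MvPolynomial (Fin s) F,
          (e'' ∈ C ∧ e'' ∉ mvSpan s r F ∧ e'' * e'' - e'' ∈ mvSpan s r F ∧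
            dftMatrix (r := r) α e'' = afforded L D) →
          e'' - e' ∈ mvSpan s r F := by
    intro D hDq hDuniv hDsupp
    have hDiff : ∀ i, i ∈ D ↔ (fun k => (q : ZMod (r k)) * i k) ∈ D := by
      intro i
      constructor
      · exact fun h => hDq i h
      · intro h
        set τ := (fun i : ∀ k, ZMod (r k) => (fun k => (q : ZMod (r k)) * i k)) with hτ
        set Dfin := (Set.toFinite D).toFinset with hDfin
        have hsub : Dfin.image τ ⊆ Dfin := by
          intro y hy
          obtain ⟨x, hx, rfl⟩ := Finset.mem_image.mp hy
          rw [hDfin, Set.Finite.mem_toFinset] at hx ⊢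
          exact hDq x hx
        have heq : Dfin.image τ = Dfin :=
          Finset.eq_of_subset_of_card_le hsub
            (le_of_eq (Finset.card_image_of_injective Dfin hbij.1).symm)
        have hτiD : τ i ∈ Dfin := by
          rw [hDfin, Set.Finite.mem_toFinset]; exact h
        rw [← heq] at hτiD
        obtain ⟨x, hx, hxe⟩ := Finset.mem_image.mp hτiD
        have : x = i := hbij.1 hxe
        subst this
        rw [hDfin, Set.Finite.mem_toFinset] at hx
        exact hx
    have htwist : ∀ i, afforded L D (fun k => (q : ZMod (r k)) * i k)
        = (afforded L D i) ^ q := by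
      intro i
      by_cases hi : i ∈ D
      · rw [afforded, afforded, if_pos hi, if_pos ((hDiff i).mp hi), zero_pow hq0]
      · rw [afforded, afforded, if_neg hi, if_neg (fun h => hi ((hDiff i).mpr h)),
          one_pow]
    have haq : ∀ j, (((∏ k, r k : ℕ) : L)⁻¹ *
        ∑ i, afforded L D i * adW (fun k => (α k)⁻¹) i j) ^ q
        = ((∏ k, r k : ℕ) : L)⁻¹ *
        ∑ i, afforded L D i * adW (fun k => (α k)⁻¹) i j :=
      fun j => adCoefFixed q hq hα hbij (afforded L D) htwist j
    choose b hb using fun j => adFixed (L := L) q hq (haq j)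
    have hmapb : MvPolynomial.map (algebraMap F L) (adRed r b)
        = adRed r (fun j => ((∏ k, r k : ℕ) : L)⁻¹ *
            ∑ i, afforded L D i * adW (fun k => (α k)⁻¹) i j) := by
      rw [adMapRed]
      congr 1
      funext j
      exact hb j
    have hdfte' : dftMatrix (r := r) α (adRed r b) = afforded L D := by
      funext i
      rw [show dftMatrix (r := r) α (adRed r b) i = MvPolynomial.eval (evalPt α i)
          (MvPolynomial.map (algebraMap F L) (adRed r b)) from adDftEval α _ i, hmapb]
      exact adInvB hα hNL (afforded L D) i
    have hvne : afforded L D ≠ (0 : (∀ k, ZMod (r k)) → L) := by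
      obtain ⟨i, hi⟩ : ∃ i, i ∉ D := by
        by_contra hall
        push_neg at hall
        exact hDuniv (Set.eq_univ_of_forall hall)
      intro h0
      have := congrFun h0 i
      simp only [afforded, if_neg hi, Pi.zero_apply] at this
      exact one_ne_zero this
    have he'nspan : adRed r b ∉ mvSpan s r F := by
      intro hs
      exact hvne (by rw [← hdfte']; exact (hker _).mpr hs)
    have hv01 : ∀ i, afforded L D i = 0 ∨ afforded L D i = 1 := by
      intro i
      by_cases hi : i ∈ D
      · left; rw [afforded, if_pos hi]
      · right; rw [afforded, if_neg hi]
    have he'id : adRed r b * adRed r b - adRed r b ∈ mvSpan s r F := by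
      rw [← hker]
      rw [funext_iff]
      intro i
      simp only [Pi.zero_apply]
      show MvPolynomial.aeval (evalPt α i) (adRed r b * adRed r b - adRed r b) = 0
      rw [map_sub, map_mul,
        show MvPolynomial.aeval (evalPt α i) (adRed r b) = afforded L D i from
          congrFun hdfte' i]
      rcases hv01 i with h | h <;> rw [h] <;> ring
    have hmule : adRed r b - e * adRed r b ∈ mvSpan s r F := by
      rw [← hker]
      rw [funext_iff]
      intro i
      simp only [Pi.zero_apply]
      show MvPolynomial.aeval (evalPt α i) (adRed r b - e * adRed r b) = 0
      rw [map_sub, map_mul,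
        show MvPolynomial.aeval (evalPt α i) (adRed r b) = afforded L D i from
          congrFun hdfte' i]
      by_cases hi : i ∈ D
      · rw [show afforded L D i = 0 from by rw [afforded, if_pos hi], mul_zero, sub_zero]
      · have h1 : afforded L D i = 1 := by rw [afforded, if_neg hi]
        have hMne : M i ≠ 0 := hDsupp (by
          show afforded L D i ≠ 0
          rw [h1]; exact one_ne_zero)
        have h2 : dftMatrix (r := r) α e i ≠ 0 := by
          intro h0
          exact (hMdef i).mp hMne ((hdefSet i).mpr h0)
        have h3 : dftMatrix (r := r) α e i = 1 := (hE01 i).resolve_left h2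
        rw [h1, show MvPolynomial.aeval (evalPt α i) e = 1 from h3, one_mul, sub_self]
    have he'C : adRed r b ∈ C := by
      have h1 : adRed r b = (adRed r b - e * adRed r b) + e * adRed r b := by ring
      rw [hgen, h1]
      exact Submodule.add_mem_sup hmule
        (Ideal.mem_span_singleton'.mpr ⟨adRed r b, mul_comm _ _⟩)
    refine ⟨adRed r b, ⟨he'C, he'nspan, he'id, hdfte'⟩, ?_⟩
    rintro e'' ⟨_, _, _, hd''⟩
    rw [← hker]
    rw [funext_iff]
    intro i
    simp only [Pi.zero_apply]
    show MvPolynomial.aeval (evalPt α i) (e'' - adRed r b) = 0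
    rw [map_sub,
      show MvPolynomial.aeval (evalPt α i) e'' = afforded L D i from congrFun hd'' i,
      show MvPolynomial.aeval (evalPt α i) (adRed r b) = afforded L D i from
        congrFun hdfte' i, sub_self]
  -- PART 2
  have hpart2 : ∀ e' : MvPolynomial (Fin s) F,
      e' ∈ C → e' ∉ mvSpan s r F → e' * e' - e' ∈ mvSpan s r F →
      ∃ D : Set (∀ k, ZMod (r k)), qClosed q D ∧ D ≠ Set.univ ∧
        {i | afforded L D i ≠ 0} ⊆ {i | M i ≠ 0} ∧
        dftMatrix (r := r) α e' = afforded L D := by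
    intro e' hC hnspan hid
    refine ⟨{i | dftMatrix (r := r) α e' i = 0}, ?_, ?_, ?_, ?_⟩
    · intro i hi
      show dftMatrix (r := r) α e' (fun k => (q : ZMod (r k)) * i k) = 0
      rw [adFrobDft q hq hα e' i, show dftMatrix (r := r) α e' i = 0 from hi,
        zero_pow hq0]
    · intro huniv
      apply hnspan
      rw [← hker]
      rw [funext_iff]
      intro i
      simp only [Pi.zero_apply]
      have : i ∈ {i | dftMatrix (r := r) α e' i = 0} := by rw [huniv]; trivial
      exact this
    · intro i hi
      have hne : dftMatrix (r := r) α e' i ≠ 0 := by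
        intro h0
        apply hi
        show afforded L {i | dftMatrix (r := r) α e' i = 0} i = 0
        rw [afforded, if_pos (show i ∈ {i | dftMatrix (r := r) α e' i = 0} from h0)]
      show M i ≠ 0
      rw [hMdef i]
      intro hd
      exact hne (hd e' hC)
    · funext i
      rw [afforded]
      by_cases hi : dftMatrix (r := r) α e' i = 0
      · rw [if_pos (show i ∈ {i | dftMatrix (r := r) α e' i = 0} from hi)]; exact hi
      · rw [if_neg (show i ∉ {i | dftMatrix (r := r) α e' i = 0} from hi)]
        have h0 : dftMatrix (r := r) α (e' * e' - e') = 0 := (hker _).mpr hid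
        have h1 := congrFun h0 i
        simp only [dftMatrix, map_sub, map_mul, Pi.zero_apply] at h1
        exact (hval01 _ (sub_eq_zero.mp h1)).resolve_left hi
  refine ⟨hpart1, hpart2, ?_⟩
  -- PART 3
  apply le_antisymm
  · refine le_iInf₂ fun P hP => ?_
    obtain ⟨⟨D, hDq, rfl⟩, hP0, hPsub⟩ := hP
    have hDuniv : D ≠ Set.univ := by
      rintro rfl
      apply hP0
      funext i
      rw [afforded, if_pos (Set.mem_univ i)]
      rfl
    obtain ⟨e', ⟨he'C, he'ns, _, hd⟩, _⟩ := hpart1 D hDq hDuniv hPsub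
    have hle : appDistCodeAt r B α C ≤ hypDist B s r (dftMatrix (r := r) α e') := by
      rw [appDistCodeAt]
      exact iInf₂_le e' ⟨he'C, he'ns⟩
    rwa [hd] at hle
  · rw [appDistCodeAt]
    refine le_iInf₂ fun c hc => ?_
    obtain ⟨hcC, hcns⟩ := hc
    have h1 : (⨅ P ∈ {P : (∀ k, ZMod (r k)) → L |
          (∃ D, qClosed q D ∧ P = afforded L D) ∧ P ≠ 0 ∧
          {i | P i ≠ 0} ⊆ {i | M i ≠ 0}}, hypDist B s r P)
        ≤ hypDist B s r (afforded L {i | dftMatrix (r := r) α c i = 0}) := by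
      refine iInf₂_le (afforded L {i | dftMatrix (r := r) α c i = 0})
        ⟨⟨{i | dftMatrix (r := r) α c i = 0}, ?_, rfl⟩, ?_, ?_⟩
      · intro i hi
        show dftMatrix (r := r) α c (fun k => (q : ZMod (r k)) * i k) = 0
        rw [adFrobDft q hq hα c i, show dftMatrix (r := r) α c i = 0 from hi,
          zero_pow hq0]
      · intro h0
        apply hcns
        rw [← hker]
        rw [funext_iff]
        intro i
        simp only [Pi.zero_apply]
        have h2 := congrFun h0 i
        rw [afforded] at h2
        by_cases hi : i ∈ {i | dftMatrix (r := r) α c i = 0}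
        · exact hi
        · rw [if_neg hi] at h2
          exact absurd h2 one_ne_zero
      · intro i hi
        have hne : dftMatrix (r := r) α c i ≠ 0 := by
          intro h0
          apply hi
          show afforded L {i | dftMatrix (r := r) α c i = 0} i = 0
          rw [afforded, if_pos (show i ∈ {i | dftMatrix (r := r) α c i = 0} from h0)]
        show M i ≠ 0
        rw [hMdef i]
        intro hd
        exact hne (hd c hcC)
    refine le_trans h1 (le_of_eq ?_)
    refine hypDist_congr B s r _ _ fun i => ?_
    rw [afforded]
    by_cases hi : dftMatrix (r := r) α c i = 0
    · rw [if_pos (show i ∈ {i | dftMatrix (r := r) α c i = 0} from hi)]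
      exact iff_of_true rfl hi
    · rw [if_neg (show i ∉ {i | dftMatrix (r := r) α c i = 0} from hi)]
      exact iff_of_false one_ne_zero hi
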